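/- Let G be a finite connected graph and let M, H, H' be maximally intersecting matchings in G. Then every end-edge of a maximal M-H alternating path belongs to H'. -/

import Mathlib

variable {V : Type*}

/-- A matching of `G`, given as a set of edges: a set of edges of `G` that are
pairwise non-adjacent (no two distinct edges share a vertex). -/
def IsMatchingSet (G : SimpleGraph V) (M : Set (Sym2 V)) : Prop :=
  M ⊆ G.edgeSet ∧ ∀ e ∈ M, ∀ f ∈ M, e ≠ f → ∀ v : V, ¬(v ∈ e ∧ v ∈ f)

/-- ν(G): the maximum size of a matching of `G`. -/
noncomputable def matchingNumber (G : SimpleGraph V) : ℕ :=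
  sSup {n | ∃ M : Set (Sym2 V), IsMatchingSet G M ∧ M.ncard = n}

/-- λ(G): the maximum of |H| + |H'| over pairs (H, H') of disjoint matchings of `G`. -/
noncomputable def lambdaParam (G : SimpleGraph V) : ℕ :=
  sSup {n | ∃ H H' : Set (Sym2 V), IsMatchingSet G H ∧ IsMatchingSet G H' ∧
    Disjoint H H' ∧ H.ncard + H'.ncard = n}

/-- μ(G): the maximum of |H| over pairs (H, H') of disjoint matchings of `G` with
|H| + |H'| = λ(G). -/
noncomputable def muParam (G : SimpleGraph V) : ℕ :=
  sSup {n | ∃ H H' : Set (Sym2 V), IsMatchingSet G H ∧ IsMatchingSet G H' ∧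
    Disjoint H H' ∧ H.ncard + H'.ncard = lambdaParam G ∧ H.ncard = n}

/-- A list of edges alternately lies in `A ∖ B` and `B ∖ A`. -/
def AltList (A B : Set (Sym2 V)) (l : List (Sym2 V)) : Prop :=
  (∀ e ∈ l, (e ∈ A ∧ e ∉ B) ∨ (e ∈ B ∧ e ∉ A)) ∧
  List.Chain' (fun e f => ¬(e ∈ A ↔ f ∈ A)) l

/-- An `A`-`B` alternating path in `G`: a (nontrivial) path whose edges alternately lie in
`A ∖ B` and `B ∖ A`. -/
def IsAltPath (G : SimpleGraph V) (A B : Set (Sym2 V)) {u v : V} (p : G.Walk u v) : Prop :=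
  0 < p.length ∧ p.IsPath ∧ AltList A B p.edges

/-- A maximal `A`-`B` alternating path: an alternating path that cannot be extended to a
longer alternating path at either of its ends. -/
def IsMaxAltPath (G : SimpleGraph V) (A B : Set (Sym2 V)) {u v : V} (p : G.Walk u v) : Prop :=
  IsAltPath G A B p ∧
  (∀ w, ∀ h : G.Adj w u, ¬ IsAltPath G A B (SimpleGraph.Walk.cons h p)) ∧
  (∀ w, ∀ h : G.Adj w v, ¬ IsAltPath G A B (SimpleGraph.Walk.cons h p.reverse))

/-- `M` is a maximum matching of `G`. -/
def IsMaxMatching (G : SimpleGraph V) (M : Set (Sym2 V)) : Prop :=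
  IsMatchingSet G M ∧ ∀ M' : Set (Sym2 V), IsMatchingSet G M' → M'.ncard ≤ M.ncard

/-- `(H, H')` is a pair of disjoint matchings of `G` with `|H| + |H'| = λ(G)` and
`|H| = μ(G)`. -/
def IsLambdaMuPair (G : SimpleGraph V) (H H' : Set (Sym2 V)) : Prop :=
  IsMatchingSet G H ∧ IsMatchingSet G H' ∧ Disjoint H H' ∧
  H.ncard + H'.ncard = lambdaParam G ∧ H.ncard = muParam G

/-- The matchings `M`, `H`, `H'` are maximally intersecting:
(i) `M` is a maximum matching; (ii) `(H, H') ∈ Λ(G)` with `|H| = μ(G)`;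
(iii) `|M ∩ (H ∪ H')|` is maximum among all such triples;
(iv) `|M ∩ H|` is maximum among all such triples also satisfying (iii). -/
def MaxIntersecting (G : SimpleGraph V) (M H H' : Set (Sym2 V)) : Prop :=
  IsMaxMatching G M ∧ IsLambdaMuPair G H H' ∧
  (∀ M₂ H₂ H₂' : Set (Sym2 V), IsMaxMatching G M₂ → IsLambdaMuPair G H₂ H₂' →
    (M₂ ∩ (H₂ ∪ H₂')).ncard ≤ (M ∩ (H ∪ H')).ncard) ∧
  (∀ M₂ H₂ H₂' : Set (Sym2 V), IsMaxMatching G M₂ → IsLambdaMuPair G H₂ H₂' →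
    (M₂ ∩ (H₂ ∪ H₂')).ncard = (M ∩ (H ∪ H')).ncard → (M₂ ∩ H₂).ncard ≤ (M ∩ H).ncard)


namespace Stmt11


/-- vertex of an edge of a walk is in the support -/
lemma mem_support_of_edge {G : SimpleGraph V} {u v : V} (p : G.Walk u v) {e : Sym2 V} {w : V}
    (he : e ∈ p.edges) (hw : w ∈ e) : w ∈ p.support := by
  obtain ⟨z, rfl⟩ := Sym2.mem_iff_exists.mp hw
  exact p.fst_mem_support_of_mem_edges he

/-- the only edge of a path containing the start vertex is the first edge -/
lemma start_edge_unique {G : SimpleGraph V} {u v : V} (p : G.Walk u v) (hp : p.IsPath)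
    {f : Sym2 V} (hf : f ∈ p.edges) (huf : u ∈ f) : p.edges.head? = some f := by
  induction p with
  | nil => simp at hf
  | cons h q ih =>
    rw [SimpleGraph.Walk.edges_cons] at hf ⊢
    rcases List.mem_cons.mp hf with rfl | hf'
    · rfl
    · exact absurd (mem_support_of_edge q hf' huf) ((SimpleGraph.Walk.cons_isPath_iff _ _).mp hp).2

lemma start_mem_head_edge {G : SimpleGraph V} {u v : V} (p : G.Walk u v)
    {e : Sym2 V} (he : p.edges.head? = some e) : u ∈ e := by
  cases p with
  | nil => simp at he
  | cons h q =>
    rw [SimpleGraph.Walk.edges_cons] at he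
    simp only [List.head?_cons, Option.some.injEq] at he
    subst he; simp

lemma end_edge_unique {G : SimpleGraph V} {u v : V} (p : G.Walk u v) (hp : p.IsPath)
    {f : Sym2 V} (hf : f ∈ p.edges) (hvf : v ∈ f) : p.edges.getLast? = some f := by
  have := start_edge_unique p.reverse hp.reverse (by rw [SimpleGraph.Walk.edges_reverse]; simpa) hvf
  rwa [SimpleGraph.Walk.edges_reverse, List.head?_reverse] at this

lemma end_mem_last_edge {G : SimpleGraph V} {u v : V} (p : G.Walk u v)
    {e : Sym2 V} (he : p.edges.getLast? = some e) : v ∈ e := by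
  have : p.reverse.edges.head? = some e := by
    rw [SimpleGraph.Walk.edges_reverse, List.head?_reverse]; exact he
  exact start_mem_head_edge p.reverse this

/-- two distinct edges of a path sharing a vertex are adjacent in the chain,
hence differ in `M`-membership. -/
lemma share_not_iff {G : SimpleGraph V} {M : Set (Sym2 V)} {u v : V} (p : G.Walk u v)
    (hp : p.IsPath) (hch : List.Chain' (fun e f => ¬(e ∈ M ↔ f ∈ M)) p.edges)
    {e f : Sym2 V} {w : V} (he : e ∈ p.edges) (hf : f ∈ p.edges) (hef : e ≠ f)
    (hwe : w ∈ e) (hwf : w ∈ f) : ¬(e ∈ M ↔ f ∈ M) := by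
  induction p with
  | nil => simp at he
  | @cons a b c hadj q ih =>
    rw [SimpleGraph.Walk.edges_cons] at he hf hch
    have hpq : q.IsPath := ((SimpleGraph.Walk.cons_isPath_iff _ _).mp hp).1
    have hbs : a ∉ q.support := ((SimpleGraph.Walk.cons_isPath_iff _ _).mp hp).2
    have hch' := (List.isChain_cons.mp hch)
    rcases List.mem_cons.mp he with rfl | he' <;> rcases List.mem_cons.mp hf with rfl | hf'
    · exact absurd rfl hef
    · -- e = s(b,c) head, f in q.edges
      rcases Sym2.mem_iff.mp hwe with rfl | rfl
      · exact absurd (mem_support_of_edge q hf' hwf) hbs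
      · have hhd := start_edge_unique q hpq hf' hwf
        exact hch'.1 f (Option.mem_def.mpr hhd)
    · rcases Sym2.mem_iff.mp hwf with rfl | rfl
      · exact absurd (mem_support_of_edge q he' hwe) hbs
      · have hhd := start_edge_unique q hpq he' hwe
        have := hch'.1 e (Option.mem_def.mpr hhd)
        tauto
    · exact ih hpq hch'.2 he' hf'

/-- each internal vertex of an alternating path lies on an `M∖H` edge and an `H∖M` edge
of the path. -/
lemma internal_edges {G : SimpleGraph V} {M H : Set (Sym2 V)} {u v : V} (p : G.Walk u v)
    (hp : p.IsPath)
    (hmem : ∀ e ∈ p.edges, (e ∈ M ∧ e ∉ H) ∨ (e ∈ H ∧ e ∉ M))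
    (hch : List.Chain' (fun e f => ¬(e ∈ M ↔ f ∈ M)) p.edges)
    {w : V} (hw : w ∈ p.support) (hwu : w ≠ u) (hwv : w ≠ v) :
    (∃ g ∈ p.edges, w ∈ g ∧ g ∈ M ∧ g ∉ H) ∧ (∃ g ∈ p.edges, w ∈ g ∧ g ∈ H ∧ g ∉ M) := by
  induction p with
  | nil => simp at hw; exact absurd hw hwu
  | @cons a b c hadj q ih =>
    rw [SimpleGraph.Walk.support_cons] at hw
    rcases List.mem_cons.mp hw with rfl | hw'
    · exact absurd rfl hwu
    · have hpq : q.IsPath := ((SimpleGraph.Walk.cons_isPath_iff _ _).mp hp).1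
      rw [SimpleGraph.Walk.edges_cons] at hmem hch ⊢
      by_cases hwb : w = b
      · subst hwb
        cases q with
        | nil => exact absurd rfl hwv
        | @cons _ d _ h2 r =>
          rw [SimpleGraph.Walk.edges_cons] at hmem hch ⊢
          have hrel : ¬(s(a, w) ∈ M ↔ s(w, d) ∈ M) := (List.isChain_cons_cons.mp hch).1
          have h0 := hmem s(a, w) (by simp)
          have h1 := hmem s(w, d) (by simp)
          have hw0 : w ∈ s(a, w) := by simp
          have hw1 : w ∈ s(w, d) := by simp
          by_cases hM : s(a, w) ∈ M
          · refine ⟨⟨s(a, w), by simp, hw0, hM, ?_⟩, ⟨s(w, d), by simp, hw1, ?_, ?_⟩⟩ <;> tauto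
          · refine ⟨⟨s(w, d), by simp, hw1, ?_, ?_⟩, ⟨s(a, w), by simp, hw0, ?_, hM⟩⟩ <;> tauto
      · have := ih hpq (fun e he => hmem e (List.mem_cons_of_mem _ he))
          (List.isChain_cons.mp hch).2 hw' hwb hwv
        obtain ⟨⟨g1, hg1, h1⟩, ⟨g2, hg2, h2⟩⟩ := this
        exact ⟨⟨g1, List.mem_cons_of_mem _ hg1, h1⟩, ⟨g2, List.mem_cons_of_mem _ hg2, h2⟩⟩



/-- alternating count identity over ℤ -/
lemma alt_count_int {M : Set (Sym2 V)} [DecidablePred (· ∈ M)] :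
    ∀ (l : List (Sym2 V)), List.Chain' (fun e f => ¬(e ∈ M ↔ f ∈ M)) l →
    ∀ hd lst, l.head? = some hd → l.getLast? = some lst →
    (l.countP (fun e => decide (e ∈ M)) : ℤ) - l.countP (fun e => decide (e ∉ M)) =
      (if hd ∈ M then 1 else 0) + (if lst ∈ M then 1 else 0) - 1 := by
  intro l
  induction l with
  | nil => intro _ hd lst h; simp at h
  | cons x t ih =>
    intro hch hd lst hh hl
    simp only [List.head?_cons, Option.some.injEq] at hh
    subst hh
    cases t with
    | nil =>
      simp only [List.getLast?_singleton, Option.some.injEq] at hl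
      subst hl
      by_cases hx : x ∈ M <;> simp [hx, List.countP_cons]
    | cons y r =>
      rw [List.getLast?_cons_cons] at hl
      have hch2 := List.isChain_cons_cons.mp hch
      have hih := ih hch2.2 y lst rfl hl
      have hxy : x ∈ M ↔ y ∉ M := by have := hch2.1; tauto
      rw [List.countP_cons, List.countP_cons]
      by_cases hx : x ∈ M <;> by_cases hy : y ∈ M <;> by_cases hlst : lst ∈ M
      all_goals first
        | tauto
        | (simp only [hx, hy, hlst, if_true, if_false, decide_eq_true_eq,
             decide_not] at hih ⊢
           simp [hx, hy, hlst] at hih ⊢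
           omega)
  
lemma ncard_filter_list (l : List (Sym2 V)) (hl : l.Nodup) (q : Sym2 V → Prop)
    [DecidablePred q] :
    {a | a ∈ l ∧ q a}.ncard = l.countP (fun a => decide (q a)) := by
  classical
  have : {a | a ∈ l ∧ q a} = ↑((l.filter (fun a => decide (q a))).toFinset) := by
    ext a; simp [List.mem_filter]
  rw [this, Set.ncard_coe_finset, List.toFinset_card_of_nodup (hl.filter _),
    List.countP_eq_length_filter]


lemma matching_subset {G : SimpleGraph V} {A B : Set (Sym2 V)} (hB : IsMatchingSet G B)
    (hAB : A ⊆ B) : IsMatchingSet G A :=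
  ⟨hAB.trans hB.1, fun e he f hf => hB.2 e (hAB he) f (hAB hf)⟩

lemma matching_insert {G : SimpleGraph V} {H : Set (Sym2 V)} {e : Sym2 V}
    (hH : IsMatchingSet G H) (he : e ∈ G.edgeSet)
    (hsep : ∀ g ∈ H, ∀ w, w ∈ e → w ∈ g → False) : IsMatchingSet G (insert e H) := by
  constructor
  · rintro f (rfl | hf)
    · exact he
    · exact hH.1 hf
  · rintro f (rfl | hf) g (rfl | hg) hfg w ⟨hwf, hwg⟩
    · exact hfg rfl
    · exact hsep g hg w hwf hwg
    · exact hsep f hf w hwg hwf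
    · exact hH.2 f hf g hg hfg w ⟨hwf, hwg⟩

lemma swap_matching {G : SimpleGraph V} {M : Set (Sym2 V)} (hM : IsMatchingSet G M)
    (S T : Set (Sym2 V)) (hS : S ⊆ M) (hT : T ⊆ G.edgeSet)
    (hTpair : ∀ e ∈ T, ∀ f ∈ T, e ≠ f → ∀ w : V, ¬(w ∈ e ∧ w ∈ f))
    (hmix : ∀ e ∈ M, e ∉ S → ∀ f ∈ T, ∀ w : V, ¬(w ∈ e ∧ w ∈ f)) :
    IsMatchingSet G ((M \ S) ∪ T) := by
  constructor
  · rintro f (⟨hf, -⟩ | hf)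
    · exact hM.1 hf
    · exact hT hf
  · rintro e (⟨heM, heS⟩ | heT) f (⟨hfM, hfS⟩ | hfT) hef w ⟨hwe, hwf⟩
    · exact hM.2 e heM f hfM hef w ⟨hwe, hwf⟩
    · exact hmix e heM heS f hfT w ⟨hwe, hwf⟩
    · exact hmix f hfM hfS e heT w ⟨hwf, hwe⟩
    · exact hTpair e heT f hfT hef w ⟨hwe, hwf⟩

lemma swap_card [Fintype V] {M : Set (Sym2 V)} (S T : Set (Sym2 V)) (hS : S ⊆ M)
    (hTM : ∀ e ∈ T, e ∉ M) :
    ((M \ S) ∪ T).ncard = M.ncard - S.ncard + T.ncard := by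
  have hfin : ∀ A : Set (Sym2 V), A.Finite := fun A => A.toFinite
  rw [Set.ncard_union_eq (by
      rw [Set.disjoint_left]; rintro e ⟨heM, -⟩ heT; exact hTM e heT heM) (hfin _) (hfin _),
    Set.ncard_diff hS (hfin _)]

lemma inter_card [Fintype V] {M : Set (Sym2 V)} (S T X : Set (Sym2 V)) (hS : S ⊆ M)
    (hTM : ∀ e ∈ T, e ∉ M) :
    (((M \ S) ∪ T) ∩ X).ncard = (M ∩ X).ncard - (S ∩ X).ncard + (T ∩ X).ncard := by
  have hfin : ∀ A : Set (Sym2 V), A.Finite := fun A => A.toFinite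
  have heq : ((M \ S) ∪ T) ∩ X = ((M ∩ X) \ (S ∩ X)) ∪ (T ∩ X) := by
    ext e
    simp only [Set.mem_inter_iff, Set.mem_union, Set.mem_diff]
    constructor
    · rintro ⟨(⟨heM, heS⟩ | heT), heX⟩
      · exact Or.inl ⟨⟨heM, heX⟩, fun h => heS h.1⟩
      · exact Or.inr ⟨heT, heX⟩
    · rintro (⟨⟨heM, heX⟩, heS⟩ | ⟨heT, heX⟩)
      · exact ⟨Or.inl ⟨heM, fun h => heS ⟨h, heX⟩⟩, heX⟩
      · exact ⟨Or.inr heT, heX⟩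
  rw [heq, Set.ncard_union_eq (by
      rw [Set.disjoint_left]; rintro e ⟨⟨heM, -⟩, -⟩ ⟨heT, -⟩; exact hTM e heT heM)
      (hfin _) (hfin _),
    Set.ncard_diff (show S ∩ X ⊆ M ∩ X from fun e he => ⟨hS he.1, he.2⟩) (hfin _)]

lemma bddAbove_lambda_set [Fintype V] (G : SimpleGraph V) :
    BddAbove {n | ∃ H H' : Set (Sym2 V), IsMatchingSet G H ∧ IsMatchingSet G H' ∧
      Disjoint H H' ∧ H.ncard + H'.ncard = n} := by
  refine ⟨2 * (Set.univ : Set (Sym2 V)).ncard, ?_⟩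
  rintro n ⟨A, B, hA, hB, hd, rfl⟩
  have h1 := Set.ncard_le_ncard (Set.subset_univ A) Set.finite_univ
  have h2 := Set.ncard_le_ncard (Set.subset_univ B) Set.finite_univ
  omega

lemma le_lambda [Fintype V] {G : SimpleGraph V} {A B : Set (Sym2 V)}
    (hA : IsMatchingSet G A) (hB : IsMatchingSet G B) (hd : Disjoint A B) :
    A.ncard + B.ncard ≤ lambdaParam G :=
  le_csSup (bddAbove_lambda_set G) ⟨A, B, hA, hB, hd, rfl⟩

/-- The main swap contradiction lemma. -/
lemma swap_false [Fintype V] {G : SimpleGraph V} {M H H' : Set (Sym2 V)}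
    (hmax : MaxIntersecting G M H H') (S T : Set (Sym2 V))
    (hS : S ⊆ M) (hSH : ∀ e ∈ S, e ∉ H) (hTH : T ⊆ H) (hTM : ∀ e ∈ T, e ∉ M)
    (hTpair : ∀ e ∈ T, ∀ f ∈ T, e ≠ f → ∀ w : V, ¬(w ∈ e ∧ w ∈ f))
    (hmix : ∀ e ∈ M, e ∉ S → ∀ f ∈ T, ∀ w : V, ¬(w ∈ e ∧ w ∈ f))
    (hcard : T.ncard = S.ncard)
    (hbad : T.Nonempty ∨ ∃ e, e ∈ S ∧ e ∉ H') : False := by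
  obtain ⟨hMmax, hpair, hiii, hiv⟩ := hmax
  have hfin : ∀ A : Set (Sym2 V), A.Finite := fun A => A.toFinite
  set M₂ := (M \ S) ∪ T with hM₂
  have hmatch : IsMatchingSet G M₂ :=
    swap_matching hMmax.1 S T hS (fun e he => hpair.1.1 (hTH he)) hTpair hmix
  have hSM : S.ncard ≤ M.ncard := Set.ncard_le_ncard hS (hfin _)
  have hcard2 : M₂.ncard = M.ncard := by
    rw [hM₂, swap_card S T hS hTM]; omega
  have hmax2 : IsMaxMatching G M₂ :=
    ⟨hmatch, fun M' hM' => (hMmax.2 M' hM').trans_eq hcard2.symm⟩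
  -- intersection with X = H ∪ H'
  have hSX : S ∩ (H ∪ H') = S ∩ H' := by
    ext e; simp only [Set.mem_inter_iff, Set.mem_union]
    exact ⟨fun ⟨he, h⟩ => ⟨he, h.resolve_left (hSH e he)⟩, fun ⟨he, h⟩ => ⟨he, Or.inr h⟩⟩
  have hTX : T ∩ (H ∪ H') = T := by
    ext e; simp only [Set.mem_inter_iff, Set.mem_union]
    exact ⟨fun h => h.1, fun h => ⟨h, Or.inl (hTH h)⟩⟩
  have hintX : (M₂ ∩ (H ∪ H')).ncard
      = (M ∩ (H ∪ H')).ncard - (S ∩ H').ncard + T.ncard := by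
    rw [hM₂, inter_card S T _ hS hTM, hSX, hTX]
  have hSXle : (S ∩ H').ncard ≤ (S ∩ (H ∪ H')).ncard := by
    rw [hSX]
  have hSXM : (S ∩ (H ∪ H')).ncard ≤ (M ∩ (H ∪ H')).ncard :=
    Set.ncard_le_ncard (fun e he => ⟨hS he.1, he.2⟩) (hfin _)
  have hSH'le : (S ∩ H').ncard ≤ S.ncard := Set.ncard_le_ncard Set.inter_subset_left (hfin _)
  have hle := hiii M₂ H H' hmax2 hpair
  rcases hbad with hne | ⟨e0, he0S, he0H'⟩
  · -- equality case, use (iv)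
    have heq : (M₂ ∩ (H ∪ H')).ncard = (M ∩ (H ∪ H')).ncard := by omega
    have hiv2 := hiv M₂ H H' hmax2 hpair heq
    have hSHX : S ∩ H = ∅ := by
      ext e; simp only [Set.mem_inter_iff, Set.mem_empty_iff_false, iff_false]
      rintro ⟨h1, h2⟩; exact hSH e h1 h2
    have hTHX : T ∩ H = T := by
      ext e; exact ⟨fun h => h.1, fun h => ⟨h, hTH h⟩⟩
    have hintH : (M₂ ∩ H).ncard = (M ∩ H).ncard - 0 + T.ncard := by
      rw [hM₂, inter_card S T _ hS hTM, hSHX, hTHX, Set.ncard_empty]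
    have hTpos : 0 < T.ncard := (Set.ncard_pos (hfin _)).mpr hne
    omega
  · -- strict case
    have hS1 : (S ∩ H').ncard ≤ S.ncard - 1 := by
      have hsub : S ∩ H' ⊆ S \ {e0} := by
        rintro e ⟨heS, heH'⟩
        exact ⟨heS, fun h => he0H' (h ▸ heH')⟩
      calc (S ∩ H').ncard ≤ (S \ {e0}).ncard := Set.ncard_le_ncard hsub (hfin _)
        _ = S.ncard - 1 := by
            rw [Set.ncard_diff (by simpa using he0S) (hfin _), Set.ncard_singleton]
    have hSpos : 0 < S.ncard := (Set.ncard_pos (hfin _)).mpr ⟨e0, he0S⟩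
    omega

lemma augment_false [Fintype V] {G : SimpleGraph V} {M : Set (Sym2 V)}
    (hMmax : IsMaxMatching G M) (S T : Set (Sym2 V))
    (hS : S ⊆ M) (hT : T ⊆ G.edgeSet) (hTM : ∀ e ∈ T, e ∉ M)
    (hTpair : ∀ e ∈ T, ∀ f ∈ T, e ≠ f → ∀ w : V, ¬(w ∈ e ∧ w ∈ f))
    (hmix : ∀ e ∈ M, e ∉ S → ∀ f ∈ T, ∀ w : V, ¬(w ∈ e ∧ w ∈ f))
    (hcard : T.ncard = S.ncard + 1) : False := by
  have hfin : ∀ A : Set (Sym2 V), A.Finite := fun A => A.toFinite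
  have hmatch : IsMatchingSet G ((M \ S) ∪ T) :=
    swap_matching hMmax.1 S T hS hT hTpair hmix
  have hSM : S.ncard ≤ M.ncard := Set.ncard_le_ncard hS (hfin _)
  have h1 := hMmax.2 _ hmatch
  rw [swap_card S T hS hTM] at h1
  omega

lemma rev_max {G : SimpleGraph V} {A B : Set (Sym2 V)} {u v : V} {p : G.Walk u v}
    (hp : IsMaxAltPath G A B p) : IsMaxAltPath G A B p.reverse := by
  obtain ⟨⟨hlen, hpath, hmem, hch⟩, hu, hv⟩ := hp
  refine ⟨⟨by simpa using hlen, hpath.reverse, ?_, ?_⟩, hv, ?_⟩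
  · intro e he
    exact hmem e (by simpa [SimpleGraph.Walk.edges_reverse] using he)
  · rw [SimpleGraph.Walk.edges_reverse]; show List.IsChain _ _; rw [List.isChain_reverse]
    exact List.IsChain.imp (fun a b h => by tauto) hch
  · intro w h hc
    rw [SimpleGraph.Walk.reverse_reverse] at hc
    exact hu w h hc

/-- If an edge `f` at the start vertex could alternately extend the path, then the other
endpoint of `f` lies on the path. -/
lemma blocked_start {G : SimpleGraph V} {M H : Set (Sym2 V)} {u v : V} {p : G.Walk u v}
    (hp : IsMaxAltPath G M H p) {e1 f : Sym2 V} (he1 : p.edges.head? = some e1)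
    (hfE : f ∈ G.edgeSet) (hfu : u ∈ f)
    (hfMH : (f ∈ M ∧ f ∉ H) ∨ (f ∈ H ∧ f ∉ M))
    (hne : ¬(f ∈ M ↔ e1 ∈ M)) :
    ∃ w, f = s(u, w) ∧ w ≠ u ∧ w ∈ p.support := by
  obtain ⟨w, rfl⟩ := Sym2.mem_iff_exists.mp hfu
  have hadj : G.Adj u w := (SimpleGraph.mem_edgeSet G).mp hfE
  refine ⟨w, rfl, hadj.ne', ?_⟩
  by_contra hws
  refine hp.2.1 w hadj.symm ⟨by simp, ?_, ?_, ?_⟩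
  · rw [SimpleGraph.Walk.cons_isPath_iff]
    exact ⟨hp.1.2.1, hws⟩
  · intro e he
    rw [SimpleGraph.Walk.edges_cons] at he
    rcases List.mem_cons.mp he with rfl | he'
    · rw [Sym2.eq_swap]; exact hfMH
    · exact hp.1.2.2.1 e he'
  · rw [SimpleGraph.Walk.edges_cons]
    refine List.isChain_cons.mpr ⟨?_, hp.1.2.2.2⟩
    intro y hy
    rw [he1, Option.mem_some_iff] at hy
    subst hy
    simpa [Sym2.eq_swap] using hne

lemma path_count_rel {G : SimpleGraph V} {M : Set (Sym2 V)} [DecidablePred (· ∈ M)]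
    {u v : V} {p : G.Walk u v}
    (hpath : p.IsPath) (hch : List.Chain' (fun e f => ¬(e ∈ M ↔ f ∈ M)) p.edges)
    {e1 ek : Sym2 V} (he1 : p.edges.head? = some e1) (hek : p.edges.getLast? = some ek) :
    ({e | e ∈ p.edges ∧ e ∈ M}.ncard : ℤ) - {e | e ∈ p.edges ∧ e ∉ M}.ncard
      = (if e1 ∈ M then 1 else 0) + (if ek ∈ M then 1 else 0) - 1 := by
  classical
  rw [ncard_filter_list _ hpath.edges_nodup (· ∈ M),
    ncard_filter_list _ hpath.edges_nodup (· ∉ M)]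
  exact alt_count_int p.edges hch e1 ek he1 hek

lemma A_free [Fintype V] {G : SimpleGraph V} {M H H' : Set (Sym2 V)}
    (hmax : MaxIntersecting G M H H') {u v : V} {p : G.Walk u v}
    (hp : IsMaxAltPath G M H p) {e1 : Sym2 V} (he1 : p.edges.head? = some e1)
    (h1H : e1 ∈ H) : ∀ f ∈ M, u ∉ f := by
  classical
  have hfin : ∀ A : Set (Sym2 V), A.Finite := fun A => A.toFinite
  intro f hfM hufM
  have hpath := hp.1.2.1
  have hmem := hp.1.2.2.1
  have hch := hp.1.2.2.2
  have h1p : e1 ∈ p.edges := List.mem_of_mem_head? (by simp [he1])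
  have h1M : e1 ∉ M := by
    rcases hmem e1 h1p with ⟨-, h⟩ | ⟨-, h⟩
    · exact absurd h1H h
    · exact h
  have hu1 : u ∈ e1 := start_mem_head_edge p he1
  have hfH : f ∉ H := by
    intro hfH
    exact hmax.2.1.1.2 f hfH e1 h1H (fun h => h1M (h ▸ hfM)) u ⟨hufM, hu1⟩
  have hfp : f ∉ p.edges := by
    intro hfp
    have h2 := start_edge_unique p hpath hfp hufM
    rw [he1] at h2
    exact h1M ((Option.some.inj h2) ▸ hfM)
  obtain ⟨w, hfw, hwnu, hws⟩ :=
    blocked_start hp he1 (hmax.1.1.1 hfM) hufM (Or.inl ⟨hfM, hfH⟩) (by tauto)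
  have hnil : p.edges ≠ [] := fun h => by rw [h] at he1; simp at he1
  obtain ⟨ek, hek⟩ := Option.isSome_iff_exists.mp (List.getLast?_isSome.mpr hnil)
  have hkp : ek ∈ p.edges := List.mem_of_mem_getLast? (by simp [hek])
  have hvk : v ∈ ek := end_mem_last_edge p hek
  by_cases hwv : w = v
  · have hvf : v ∈ f := by rw [hfw, hwv]; simp
    by_cases hekM : ek ∈ M
    · -- two M-edges at v
      have hne : f ≠ ek := by
        intro h
        subst h
        have h2 := start_edge_unique p hpath hkp hufM
        rw [he1] at h2
        exact h1M ((Option.some.inj h2) ▸ hekM)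
      exact hmax.1.1.2 f hfM ek hekM hne v ⟨hvf, hvk⟩
    · -- alternating cycle: S = insert f P_M, T = P_H
      have hfPM : f ∉ {e | e ∈ p.edges ∧ e ∈ M} := fun h => hfp h.1
      refine swap_false hmax (insert f {e | e ∈ p.edges ∧ e ∈ M}) {e | e ∈ p.edges ∧ e ∉ M}
        ?_ ?_ ?_ (fun e he => he.2) ?_ ?_ ?_ (Or.inl ⟨e1, h1p, h1M⟩)
      · rintro e (rfl | ⟨-, h⟩)
        · exact hfM
        · exact h
      · rintro e (rfl | ⟨hep, heM⟩)
        · exact hfH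
        · rcases hmem e hep with ⟨-, h⟩ | ⟨-, h⟩
          · exact h
          · exact absurd heM h
      · rintro e ⟨hep, heM⟩
        rcases hmem e hep with ⟨h, -⟩ | ⟨h, -⟩
        · exact absurd h heM
        · exact h
      · rintro e heT g hgT hne w' ⟨hw'e, hw'g⟩
        exact share_not_iff p hpath hch heT.1 hgT.1 hne hw'e hw'g (iff_of_false heT.2 hgT.2)
      · rintro e heM heS g hgT w' ⟨hw'e, hw'g⟩
        have hw's : w' ∈ p.support := mem_support_of_edge p hgT.1 hw'g
        by_cases hw'uv : w' = u ∨ w' = v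
        · have hw'f : w' ∈ f := by
            rcases hw'uv with rfl | rfl
            · rw [hfw]; simp
            · exact hvf
          exact hmax.1.1.2 e heM f hfM (fun h => heS (by rw [h]; exact Set.mem_insert f _)) w' ⟨hw'e, hw'f⟩
        · push_neg at hw'uv
          obtain ⟨⟨g', hg'p, hw'g', hg'M, -⟩, -⟩ :=
            internal_edges p hpath hmem hch hw's hw'uv.1 hw'uv.2
          exact hmax.1.1.2 e heM g' hg'M
            (fun h => heS (h ▸ Set.mem_insert_of_mem _ ⟨hg'p, hg'M⟩)) w' ⟨hw'e, hw'g'⟩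
      · rw [Set.ncard_insert_of_notMem hfPM (hfin _)]
        have hrel := path_count_rel (M := M) hpath hch he1 hek
        rw [if_neg h1M, if_neg hekM] at hrel
        omega
  · obtain ⟨⟨g, hgp, hwg, hgM, -⟩, -⟩ := internal_edges p hpath hmem hch hws hwnu hwv
    exact hmax.1.1.2 f hfM g hgM (fun h => hfp (h ▸ hgp)) w ⟨by rw [hfw]; simp, hwg⟩

lemma no_H_start [Fintype V] {G : SimpleGraph V} {M H H' : Set (Sym2 V)}
    (hmax : MaxIntersecting G M H H') {u v : V} {p : G.Walk u v}
    (hp : IsMaxAltPath G M H p) {e1 : Sym2 V} (he1 : p.edges.head? = some e1)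
    (h1H : e1 ∈ H) : False := by
  classical
  have hpath := hp.1.2.1
  have hmem := hp.1.2.2.1
  have hch := hp.1.2.2.2
  have h1p : e1 ∈ p.edges := List.mem_of_mem_head? (by simp [he1])
  have h1M : e1 ∉ M := by
    rcases hmem e1 h1p with ⟨-, h⟩ | ⟨-, h⟩
    · exact absurd h1H h
    · exact h
  have hfreeu : ∀ f ∈ M, u ∉ f := A_free hmax hp he1 h1H
  have hnil : p.edges ≠ [] := fun h => by rw [h] at he1; simp at he1
  obtain ⟨ek, hek⟩ := Option.isSome_iff_exists.mp (List.getLast?_isSome.mpr hnil)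
  have hkp : ek ∈ p.edges := List.mem_of_mem_getLast? (by simp [hek])
  have hvk : v ∈ ek := end_mem_last_edge p hek
  have hSsub : {e | e ∈ p.edges ∧ e ∈ M} ⊆ M := fun e he => he.2
  have hSH : ∀ e ∈ {e | e ∈ p.edges ∧ e ∈ M}, e ∉ H := by
    rintro e ⟨hep, heM⟩
    rcases hmem e hep with ⟨-, h⟩ | ⟨-, h⟩
    · exact h
    · exact absurd heM h
  have hTH : {e | e ∈ p.edges ∧ e ∉ M} ⊆ H := by
    rintro e ⟨hep, heM⟩
    rcases hmem e hep with ⟨h, -⟩ | ⟨h, -⟩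
    · exact absurd h heM
    · exact h
  have hTpair : ∀ e ∈ {e | e ∈ p.edges ∧ e ∉ M}, ∀ g ∈ {e | e ∈ p.edges ∧ e ∉ M},
      e ≠ g → ∀ w' : V, ¬(w' ∈ e ∧ w' ∈ g) := by
    rintro e heT g hgT hne w' ⟨hw'e, hw'g⟩
    exact share_not_iff p hpath hch heT.1 hgT.1 hne hw'e hw'g (iff_of_false heT.2 hgT.2)
  by_cases hekM : ek ∈ M
  · -- path swap
    refine swap_false hmax {e | e ∈ p.edges ∧ e ∈ M} {e | e ∈ p.edges ∧ e ∉ M}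
      hSsub hSH hTH (fun e he => he.2) hTpair ?_ ?_ (Or.inl ⟨e1, h1p, h1M⟩)
    · rintro e heM heS g hgT w' ⟨hw'e, hw'g⟩
      have hw's : w' ∈ p.support := mem_support_of_edge p hgT.1 hw'g
      by_cases hw'u : w' = u
      · exact hfreeu e heM (hw'u ▸ hw'e)
      by_cases hw'v : w' = v
      · exact hmax.1.1.2 e heM ek hekM (fun h => heS (h ▸ ⟨hkp, hekM⟩)) w'
          ⟨hw'e, hw'v ▸ hvk⟩
      obtain ⟨⟨g', hg'p, hw'g', hg'M, -⟩, -⟩ :=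
        internal_edges p hpath hmem hch hw's hw'u hw'v
      exact hmax.1.1.2 e heM g' hg'M (fun h => heS (h ▸ ⟨hg'p, hg'M⟩)) w' ⟨hw'e, hw'g'⟩
    · have hrel := path_count_rel (M := M) hpath hch he1 hek
      rw [if_neg h1M, if_pos hekM] at hrel
      omega
  · -- augmenting path
    have hkH : ek ∈ H := hTH ⟨hkp, hekM⟩
    have hprev : p.reverse.edges.head? = some ek := by
      rw [SimpleGraph.Walk.edges_reverse, List.head?_reverse]; exact hek
    have hfreev : ∀ f ∈ M, v ∉ f := A_free hmax (rev_max hp) hprev hkH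
    refine augment_false hmax.1 {e | e ∈ p.edges ∧ e ∈ M} {e | e ∈ p.edges ∧ e ∉ M}
      hSsub (fun e he => p.edges_subset_edgeSet he.1) (fun e he => he.2) hTpair ?_ ?_
    · rintro e heM heS g hgT w' ⟨hw'e, hw'g⟩
      have hw's : w' ∈ p.support := mem_support_of_edge p hgT.1 hw'g
      by_cases hw'u : w' = u
      · exact hfreeu e heM (hw'u ▸ hw'e)
      by_cases hw'v : w' = v
      · exact hfreev e heM (hw'v ▸ hw'e)
      obtain ⟨⟨g', hg'p, hw'g', hg'M, -⟩, -⟩ :=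
        internal_edges p hpath hmem hch hw's hw'u hw'v
      exact hmax.1.1.2 e heM g' hg'M (fun h => heS (h ▸ ⟨hg'p, hg'M⟩)) w' ⟨hw'e, hw'g'⟩
    · have hrel := path_count_rel (M := M) hpath hch he1 hek
      rw [if_neg h1M, if_neg hekM] at hrel
      omega

lemma B_free [Fintype V] {G : SimpleGraph V} {M H H' : Set (Sym2 V)}
    (hmax : MaxIntersecting G M H H') {u v : V} {p : G.Walk u v}
    (hp : IsMaxAltPath G M H p) {e1 : Sym2 V} (he1 : p.edges.head? = some e1)
    (h1H' : e1 ∉ H') : ∀ f ∈ H, u ∉ f := by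
  classical
  have hfin : ∀ A : Set (Sym2 V), A.Finite := fun A => A.toFinite
  have hpath := hp.1.2.1
  have hmem := hp.1.2.2.1
  have hch := hp.1.2.2.2
  have h1p : e1 ∈ p.edges := List.mem_of_mem_head? (by simp [he1])
  have h1H : e1 ∉ H := fun h => no_H_start hmax hp he1 h
  have h1M : e1 ∈ M := by
    rcases hmem e1 h1p with ⟨h, -⟩ | ⟨h, -⟩
    · exact h
    · exact absurd h h1H
  have hu1 : u ∈ e1 := start_mem_head_edge p he1
  have hnil : p.edges ≠ [] := fun h => by rw [h] at he1; simp at he1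
  obtain ⟨ek, hek⟩ := Option.isSome_iff_exists.mp (List.getLast?_isSome.mpr hnil)
  have hkp : ek ∈ p.edges := List.mem_of_mem_getLast? (by simp [hek])
  have hvk : v ∈ ek := end_mem_last_edge p hek
  have hprev : p.reverse.edges.head? = some ek := by
    rw [SimpleGraph.Walk.edges_reverse, List.head?_reverse]; exact hek
  have hkH : ek ∉ H := fun h => no_H_start hmax (rev_max hp) hprev h
  have hkM : ek ∈ M := by
    rcases hmem ek hkp with ⟨h, -⟩ | ⟨h, -⟩
    · exact h
    · exact absurd h hkH
  intro f hfH hufH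
  have hfM : f ∉ M := by
    intro hfM
    exact hmax.1.1.2 f hfM e1 h1M (fun h => h1H (h ▸ hfH)) u ⟨hufH, hu1⟩
  have hfp : f ∉ p.edges := by
    intro hfp
    have h2 := start_edge_unique p hpath hfp hufH
    rw [he1] at h2
    exact h1H ((Option.some.inj h2) ▸ hfH)
  obtain ⟨w, hfw, hwnu, hws⟩ :=
    blocked_start hp he1 (hmax.2.1.1.1 hfH) hufH (Or.inr ⟨hfH, hfM⟩) (by tauto)
  by_cases hwv : w = v
  · -- alternating cycle, S = P_M, T = insert f P_H
    have hfPH : f ∉ {e | e ∈ p.edges ∧ e ∉ M} := fun h => hfp h.1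
    have huf : u ∈ f := by rw [hfw]; simp
    have hvf : v ∈ f := by rw [hfw, hwv]; simp
    have hfuv : ∀ w' : V, w' ∈ f → w' = u ∨ w' = v := by
      intro w' hw'f
      rw [hfw] at hw'f
      rcases Sym2.mem_iff.mp hw'f with rfl | rfl
      · exact Or.inl rfl
      · exact Or.inr hwv
    have endpoints : ∀ g ∈ {e | e ∈ p.edges ∧ e ∉ M}, ∀ w' : V, w' ∈ f → w' ∈ g → False := by
      rintro g ⟨hgp, hgM⟩ w' hw'f hw'g
      rcases hfuv w' hw'f with rfl | rfl
      · have h2 := start_edge_unique p hpath hgp hw'g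
        rw [he1] at h2
        exact hgM ((Option.some.inj h2) ▸ h1M)
      · have h2 := end_edge_unique p hpath hgp hw'g
        rw [hek] at h2
        exact hgM ((Option.some.inj h2) ▸ hkM)
    refine swap_false hmax {e | e ∈ p.edges ∧ e ∈ M} (insert f {e | e ∈ p.edges ∧ e ∉ M})
      (fun e he => he.2) ?_ ?_ ?_ ?_ ?_ ?_ (Or.inr ⟨e1, ⟨h1p, h1M⟩, h1H'⟩)
    · rintro e ⟨hep, heM⟩
      rcases hmem e hep with ⟨-, h⟩ | ⟨-, h⟩
      · exact h
      · exact absurd heM h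
    · rintro e (rfl | ⟨hep, heM⟩)
      · exact hfH
      · rcases hmem e hep with ⟨h, -⟩ | ⟨h, -⟩
        · exact absurd h heM
        · exact h
    · rintro e (rfl | he)
      · exact hfM
      · exact he.2
    · rintro e (rfl | heT) g (rfl | hgT) hne w' ⟨hw'e, hw'g⟩
      · exact hne rfl
      · exact endpoints g hgT w' hw'e hw'g
      · exact endpoints e heT w' hw'g hw'e
      · exact share_not_iff p hpath hch heT.1 hgT.1 hne hw'e hw'g (iff_of_false heT.2 hgT.2)
    · rintro e heM heS g hgT w' ⟨hw'e, hw'g⟩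
      have hw's : w' ∈ p.support := by
        rcases hgT with rfl | hgT
        · rcases hfuv w' hw'g with rfl | rfl
          · exact p.start_mem_support
          · exact p.end_mem_support
        · exact mem_support_of_edge p hgT.1 hw'g
      by_cases hw'u : w' = u
      · exact hmax.1.1.2 e heM e1 h1M (fun h => heS (h ▸ ⟨h1p, h1M⟩)) w' ⟨hw'e, hw'u ▸ hu1⟩
      by_cases hw'v : w' = v
      · exact hmax.1.1.2 e heM ek hkM (fun h => heS (h ▸ ⟨hkp, hkM⟩)) w' ⟨hw'e, hw'v ▸ hvk⟩
      have hgp : g ∈ p.edges := by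
        rcases hgT with rfl | hgT
        · exfalso
          rcases hfuv w' hw'g with rfl | rfl
          · exact hw'u rfl
          · exact hw'v rfl
        · exact hgT.1
      obtain ⟨⟨g', hg'p, hw'g', hg'M, -⟩, -⟩ :=
        internal_edges p hpath hmem hch hw's hw'u hw'v
      exact hmax.1.1.2 e heM g' hg'M (fun h => heS (h ▸ ⟨hg'p, hg'M⟩)) w' ⟨hw'e, hw'g'⟩
    · rw [Set.ncard_insert_of_notMem hfPH (hfin _)]
      have hrel := path_count_rel (M := M) hpath hch he1 hek
      rw [if_pos h1M, if_pos hkM] at hrel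
      omega
  · obtain ⟨-, ⟨g, hgp, hwg, hgH, -⟩⟩ := internal_edges p hpath hmem hch hws hwnu hwv
    exact hmax.2.1.1.2 f hfH g hgH (fun h => hfp (h ▸ hgp)) w ⟨by rw [hfw]; simp, hwg⟩

lemma head_mem_H' [Fintype V] {G : SimpleGraph V} {M H H' : Set (Sym2 V)}
    (hmax : MaxIntersecting G M H H') {u v : V} (p : G.Walk u v)
    (hp : IsMaxAltPath G M H p) {e1 : Sym2 V} (he1 : p.edges.head? = some e1) :
    e1 ∈ H' := by
  classical
  have hfin : ∀ A : Set (Sym2 V), A.Finite := fun A => A.toFinite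
  by_contra h1H'
  have hpath := hp.1.2.1
  have hmem := hp.1.2.2.1
  have hch := hp.1.2.2.2
  have h1p : e1 ∈ p.edges := List.mem_of_mem_head? (by simp [he1])
  have h1H : e1 ∉ H := fun h => no_H_start hmax hp he1 h
  have h1M : e1 ∈ M := by
    rcases hmem e1 h1p with ⟨h, -⟩ | ⟨h, -⟩
    · exact h
    · exact absurd h h1H
  have h1E : e1 ∈ G.edgeSet := hmax.1.1.1 h1M
  have hfreeu : ∀ f ∈ H, u ∉ f := B_free hmax hp he1 h1H'
  obtain ⟨hMmax, hpair, hiii, hiv⟩ := hmax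
  obtain ⟨hH, hH', hdisj, hsum, hmu⟩ := hpair
  cases p with
  | nil => simp at he1
  | @cons _ b _ hadj q =>
    have he1' : e1 = s(u, b) := by
      rw [SimpleGraph.Walk.edges_cons, List.head?_cons, Option.some.injEq] at he1
      exact he1.symm
    cases q with
    | nil =>
      -- single-edge path
      have hfreev : ∀ f ∈ H, v ∉ f := by
        have hprev : (SimpleGraph.Walk.cons hadj SimpleGraph.Walk.nil).reverse.edges.head?
            = some e1 := by
          rw [SimpleGraph.Walk.edges_reverse, List.head?_reverse]
          simpa using he1'.symm
        exact B_free ⟨hMmax, ⟨hH, hH', hdisj, hsum, hmu⟩, hiii, hiv⟩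
          (rev_max hp) hprev h1H'
      have hmatch : IsMatchingSet G (insert e1 H) := by
        refine matching_insert hH h1E ?_
        rintro g hgH w hwe hwg
        rw [he1'] at hwe
        rcases Sym2.mem_iff.mp hwe with rfl | rfl
        · exact hfreeu g hgH hwg
        · exact hfreev g hgH hwg
      have hdisj2 : Disjoint (insert e1 H) H' := by
        rw [Set.disjoint_left]
        rintro e (rfl | heH)
        · exact h1H'
        · exact Set.disjoint_left.mp hdisj heH
      have hle := le_lambda hmatch hH' hdisj2
      rw [Set.ncard_insert_of_notMem h1H (hfin _)] at hle
      omega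
    | @cons _ d _ h2 r =>
      -- path with at least two edges; second edge is s(b,d)
      have he2p : s(b, d) ∈ (SimpleGraph.Walk.cons hadj (SimpleGraph.Walk.cons h2 r)).edges := by
        simp
      have hrel : ¬(e1 ∈ M ↔ s(b, d) ∈ M) := by
        rw [he1']
        have := hch
        rw [SimpleGraph.Walk.edges_cons, SimpleGraph.Walk.edges_cons] at this
        exact (List.isChain_cons_cons.mp this).1
      have he2M : s(b, d) ∉ M := by tauto
      have he2H : s(b, d) ∈ H := by
        rcases hmem _ he2p with ⟨h, -⟩ | ⟨h, -⟩
        · exact absurd h he2M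
        · exact h
      have he12 : e1 ≠ s(b, d) := fun h => he2M (h ▸ h1M)
      -- new pair (H₂, H')
      set H₂ : Set (Sym2 V) := insert e1 (H \ {s(b, d)}) with hH₂def
      have hmatch : IsMatchingSet G H₂ := by
        refine matching_insert (matching_subset hH Set.diff_subset) h1E ?_
        rintro g ⟨hgH, hgne⟩ w hwe hwg
        rw [he1'] at hwe
        rcases Sym2.mem_iff.mp hwe with rfl | rfl
        · exact hfreeu g hgH hwg
        · refine hH.2 g hgH s(w, d) he2H (by simpa using hgne) w ⟨hwg, by simp⟩
      have h1HD : e1 ∉ H \ {s(b, d)} := fun h => h1H h.1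
      have hcard : H₂.ncard = H.ncard := by
        rw [hH₂def, Set.ncard_insert_of_notMem h1HD (hfin _),
          Set.ncard_diff (by simpa using he2H) (hfin _), Set.ncard_singleton]
        have : 0 < H.ncard := (Set.ncard_pos (hfin _)).mpr ⟨_, he2H⟩
        omega
      have hdisj2 : Disjoint H₂ H' := by
        rw [Set.disjoint_left]
        rintro e (rfl | ⟨heH, -⟩)
        · exact h1H'
        · exact Set.disjoint_left.mp hdisj heH
      have hpair2 : IsLambdaMuPair G H₂ H' :=
        ⟨hmatch, hH', hdisj2, by rw [hcard]; exact hsum, by rw [hcard]; exact hmu⟩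
      have hkey : M ∩ (H₂ ∪ H') = insert e1 (M ∩ (H ∪ H')) := by
        ext x
        simp only [hH₂def, Set.mem_inter_iff, Set.mem_union, Set.mem_insert_iff,
          Set.mem_diff, Set.mem_singleton_iff]
        constructor
        · rintro ⟨hxM, (rfl | ⟨hxH, -⟩) | hxH'⟩
          · exact Or.inl rfl
          · exact Or.inr ⟨hxM, Or.inl hxH⟩
          · exact Or.inr ⟨hxM, Or.inr hxH'⟩
        · rintro (rfl | ⟨hxM, hxH | hxH'⟩)
          · exact ⟨h1M, Or.inl (Or.inl rfl)⟩
          · exact ⟨hxM, Or.inl (Or.inr ⟨hxH, fun h => he2M (h ▸ hxM)⟩)⟩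
          · exact ⟨hxM, Or.inr hxH'⟩
      have h1MX : e1 ∉ M ∩ (H ∪ H') := by
        rintro ⟨-, hxH | hxH'⟩
        · exact h1H hxH
        · exact h1H' hxH'
      have hle := hiii M H₂ H' hMmax hpair2
      rw [hkey, Set.ncard_insert_of_notMem h1MX (hfin _)] at hle
      omega

end Stmt11

/-- For maximally intersecting matchings `M`, `H`, `H'` of a finite connected
graph `G`, every end-edge of a maximal `M`-`H` alternating path belongs to `H'`. -/
theorem stmt_11 [Fintype V] (G : SimpleGraph V) (hconn : G.Connected)
    (M H H' : Set (Sym2 V)) (hmax : MaxIntersecting G M H H') :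
    ∀ (u v : V) (p : G.Walk u v), IsMaxAltPath G M H p →
      (∀ e, p.edges.head? = some e → e ∈ H') ∧
      (∀ e, p.edges.getLast? = some e → e ∈ H') := by
  intro u v p hp
  constructor
  · intro e he
    exact Stmt11.head_mem_H' hmax p hp he
  · intro e he
    refine Stmt11.head_mem_H' hmax p.reverse (Stmt11.rev_max hp) ?_
    rw [SimpleGraph.Walk.edges_reverse, List.head?_reverse]
    exact he
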